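/- Let 𝒜 : {0,1}^m → ℝ^{w×w} be any function into w×w real matrices and let g : {0,1}^n × {0,1}^d → {0,1}^m be an (ε,δ)-averaging sampler. Then with probability at least 1 − w²·δ over a uniform x ∈ {0,1}^n, ‖E_{s∈{0,1}^d}[𝒜(g(x,s))] − ⟨𝒜⟩‖ ≤ 2·w·μ(𝒜)·ε. -/

import Mathlib

attribute [local instance] Matrix.linftyOpNormedRing

/-- The uniform average `E_{t∈T}[f t]` over a finite type `T`. -/
noncomputable def expectation {T : Type*} [Fintype T] (f : T → ℝ) : ℝ :=
  (∑ t, f t) / (Fintype.card T : ℝ)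

/-- The uniform average `⟨𝒜⟩ = E_{t∈T}[𝒜 t]` of a matrix-valued function. -/
noncomputable def mexpect {T : Type*} [Fintype T] {w : ℕ}
    (A : T → Matrix (Fin w) (Fin w) ℝ) : Matrix (Fin w) (Fin w) ℝ :=
  (Fintype.card T : ℝ)⁻¹ • ∑ t, A t

/-- The weight `μ(𝒜) = max_{t∈T} ‖𝒜 t‖` (ℓ∞ operator norm). -/
noncomputable def weight {T : Type*} [Fintype T] [Nonempty T] {w : ℕ}
    (A : T → Matrix (Fin w) (Fin w) ℝ) : ℝ :=
  Finset.univ.sup' Finset.univ_nonempty (fun t => ‖A t‖)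

/-- `g : X × S → T` is an `(ε,δ)`-averaging sampler. -/
def IsAvgSampler {X S T : Type*} [Fintype X] [Fintype S] [Fintype T]
    (ε δ : ℝ) (g : X → S → T) : Prop :=
  ∀ f : T → ℝ, (∀ t, f t ∈ Set.Icc (0 : ℝ) 1) →
    (1 - δ) * (Fintype.card X : ℝ) ≤
      ((Finset.univ.filter fun x : X =>
        |expectation (fun s => f (g x s)) - expectation f| ≤ ε).card : ℝ)

lemma entry_abs_le_norm {w : ℕ} (A : Matrix (Fin w) (Fin w) ℝ) (i j : Fin w) :
    |A i j| ≤ ‖A‖ := by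
  have h : ‖A i j‖₊ ≤ ‖A‖₊ := by
    calc ‖A i j‖₊ ≤ ∑ k, ‖A i k‖₊ :=
          Finset.single_le_sum (f := fun k => ‖A i k‖₊) (fun k _ => zero_le) (Finset.mem_univ j)
      _ ≤ ‖A‖₊ := by
          rw [Matrix.linfty_opNNNorm_def]
          exact Finset.le_sup (f := fun i => ∑ j, ‖A i j‖₊) (Finset.mem_univ i)
  calc |A i j| = ‖A i j‖ := (Real.norm_eq_abs _).symm
    _ ≤ ‖A‖ := h

lemma norm_le_of_entries {w : ℕ} (A : Matrix (Fin w) (Fin w) ℝ) (c : ℝ) (hc : 0 ≤ c)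
    (h : ∀ i j, |A i j| ≤ c) : ‖A‖ ≤ w * c := by
  set c' : NNReal := ⟨c, hc⟩ with hc'
  have h1 : ‖A‖₊ ≤ w • c' := by
    rw [Matrix.linfty_opNNNorm_def]
    apply Finset.sup_le
    intro i _
    calc ∑ j, ‖A i j‖₊ ≤ ∑ _j : Fin w, c' := by
          apply Finset.sum_le_sum
          intro j _
          have := h i j
          rw [← NNReal.coe_le_coe]
          show (‖A i j‖₊ : ℝ) ≤ c
          simpa using this
      _ = w • c' := by simp [Finset.sum_const]
  calc ‖A‖ = (‖A‖₊ : ℝ) := rfl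
    _ ≤ ((w • c' : NNReal) : ℝ) := by exact_mod_cast h1
    _ = w * c := by rw [nsmul_eq_mul, NNReal.coe_mul, NNReal.coe_natCast]; rfl

lemma expectation_affine {S : Type*} [Fintype S] [Nonempty S] (a : S → ℝ) (c k : ℝ) :
    expectation (fun s => (a s + c) / k) = (expectation a + c) / k := by
  have hS : (Fintype.card S : ℝ) ≠ 0 := by exact_mod_cast Fintype.card_ne_zero
  rcases eq_or_ne k 0 with hk | hk
  · simp [expectation, hk]
  · have h1 : ∑ s, (a s + c) / k = ((∑ s, a s) + (Fintype.card S : ℝ) * c) / k := by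
      rw [← Finset.sum_div]
      congr 1
      rw [Finset.sum_add_distrib, Finset.sum_const, Finset.card_univ, nsmul_eq_mul]
    unfold expectation
    rw [h1]
    field_simp

lemma mexpect_apply {T : Type*} [Fintype T] {w : ℕ}
    (A : T → Matrix (Fin w) (Fin w) ℝ) (i j : Fin w) :
    mexpect A i j = expectation (fun t => A t i j) := by
  simp [mexpect, expectation, Matrix.smul_apply, Matrix.sum_apply, div_eq_inv_mul]

theorem stmt_4 {n d m w : ℕ} (ε δ : ℝ)
    (𝒜 : (Fin m → Bool) → Matrix (Fin w) (Fin w) ℝ)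
    (g : (Fin n → Bool) → (Fin d → Bool) → (Fin m → Bool))
    (hg : IsAvgSampler ε δ g) :
    (1 - (w : ℝ) ^ 2 * δ) * (Fintype.card (Fin n → Bool) : ℝ) ≤
      ((Finset.univ.filter fun x : Fin n → Bool =>
        ‖mexpect (fun s => 𝒜 (g x s)) - mexpect 𝒜‖ ≤ 2 * w * weight 𝒜 * ε).card : ℝ) := by
  classical
  set μ := weight 𝒜 with hμdef
  have hXcard : (0 : ℝ) < (Fintype.card (Fin n → Bool) : ℝ) := by
    exact_mod_cast Fintype.card_pos
  -- δ ≥ 0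
  have hδ0 : 0 ≤ δ := by
    have h0 := hg (fun _ => 0) (fun t => by constructor <;> norm_num)
    have hle : ((Finset.univ.filter fun x : Fin n → Bool =>
        |expectation (fun s => (fun _ : Fin m → Bool => (0:ℝ)) (g x s)) -
          expectation (fun _ : Fin m → Bool => (0:ℝ))| ≤ ε).card : ℝ)
        ≤ (Fintype.card (Fin n → Bool) : ℝ) := by
      exact_mod_cast Finset.card_filter_le _ _
    nlinarith
  -- μ ≥ 0 and entry bounds
  have hμle : ∀ t, ‖𝒜 t‖ ≤ μ := by
    intro t
    rw [hμdef]
    unfold weight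
    exact Finset.le_sup' (f := fun t => ‖𝒜 t‖) (Finset.mem_univ t)
  have hμ0 : 0 ≤ μ := by
    obtain ⟨t⟩ := (inferInstance : Nonempty (Fin m → Bool))
    exact le_trans (norm_nonneg _) (hμle t)
  have hμent : ∀ t i j, |𝒜 t i j| ≤ μ := fun t i j =>
    le_trans (entry_abs_le_norm _ i j) (hμle t)
  rcases Nat.eq_zero_or_pos w with hw | hw
  · -- w = 0
    subst hw
    have htriv : ∀ x : Fin n → Bool,
        ‖mexpect (fun s => 𝒜 (g x s)) - mexpect 𝒜‖ ≤ 2 * (0:ℕ) * μ * ε := by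
      intro x
      have h0 : (mexpect (fun s => 𝒜 (g x s)) - mexpect 𝒜) = 0 := Subsingleton.elim _ _
      rw [h0]
      simp
    rw [Finset.filter_true_of_mem (fun x _ => htriv x), Finset.card_univ]
    simp
  rcases le_or_gt 0 ε with hε | hε
  swap
  · -- ε < 0 : then δ ≥ 1
    have h0 := hg (fun _ => 0) (fun t => by constructor <;> norm_num)
    have hempty : (Finset.univ.filter fun x : Fin n → Bool =>
        |expectation (fun s => (fun _ : Fin m → Bool => (0:ℝ)) (g x s)) -
          expectation (fun _ : Fin m → Bool => (0:ℝ))| ≤ ε) = ∅ := by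
      apply Finset.filter_false_of_mem
      intro x _
      simp only [expectation, Finset.sum_const_zero, zero_div, sub_zero, abs_zero]
      exact not_le.mpr hε
    rw [hempty] at h0
    simp only [Finset.card_empty, Nat.cast_zero] at h0
    have hδ1 : 1 ≤ δ := by nlinarith
    have hw2 : (1:ℝ) ≤ (w:ℝ)^2 := by
      have : (1:ℝ) ≤ (w:ℝ) := by exact_mod_cast hw
      nlinarith
    have hneg : (1 - (w:ℝ)^2 * δ) * (Fintype.card (Fin n → Bool) : ℝ) ≤ 0 := by nlinarith
    exact le_trans hneg (Nat.cast_nonneg _)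
  rcases eq_or_lt_of_le hμ0 with hμz | hμ
  · -- μ = 0 : all matrices are 0
    have hz : ∀ t, 𝒜 t = 0 := by
      intro t
      have h := hμle t
      rw [← hμz] at h
      exact norm_le_zero_iff.mp h
    have htriv : ∀ x : Fin n → Bool,
        ‖mexpect (fun s => 𝒜 (g x s)) - mexpect 𝒜‖ ≤ 2 * w * μ * ε := by
      intro x
      have h1 : mexpect (fun s => 𝒜 (g x s)) = 0 := by simp [mexpect, hz]
      have h2 : mexpect 𝒜 = 0 := by simp [mexpect, hz]
      rw [h1, h2, sub_zero, norm_zero, ← hμz]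
      simp
    rw [Finset.filter_true_of_mem (fun x _ => htriv x), Finset.card_univ]
    nlinarith [mul_nonneg (mul_nonneg (sq_nonneg (w:ℝ)) hδ0) hXcard.le]
  -- main case : μ > 0, ε ≥ 0, w ≥ 1
  set P : Fin w → Fin w → (Fin n → Bool) → Prop := fun i j x =>
    |expectation (fun s => 𝒜 (g x s) i j) - expectation (fun t => 𝒜 t i j)| ≤ 2 * μ * ε
    with hP
  -- per-pair sampler bound
  have claimA : ∀ i j, (1 - δ) * (Fintype.card (Fin n → Bool) : ℝ) ≤
      ((Finset.univ.filter (P i j)).card : ℝ) := by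
    intro i j
    set f : (Fin m → Bool) → ℝ := fun t => (𝒜 t i j + μ) / (2 * μ) with hf
    have hfIcc : ∀ t, f t ∈ Set.Icc (0:ℝ) 1 := by
      intro t
      have h := hμent t i j
      have h1 : -μ ≤ 𝒜 t i j := neg_le_of_abs_le h
      have h2 : 𝒜 t i j ≤ μ := le_of_abs_le h
      constructor
      · apply div_nonneg _ (by linarith)
        linarith
      · rw [div_le_one (by linarith)]
        linarith
    have h := hg f hfIcc
    have hne : (0:ℝ) < 2 * μ := by linarith
    have heq : ∀ x : Fin n → Bool,
        (|expectation (fun s => f (g x s)) - expectation f| ≤ ε) ↔ P i j x := by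
      intro x
      have e1 : expectation (fun s => f (g x s)) =
          (expectation (fun s => 𝒜 (g x s) i j) + μ) / (2 * μ) :=
        expectation_affine (fun s => 𝒜 (g x s) i j) μ (2 * μ)
      have e2 : expectation f = (expectation (fun t => 𝒜 t i j) + μ) / (2 * μ) :=
        expectation_affine (fun t => 𝒜 t i j) μ (2 * μ)
      rw [e1, e2, div_sub_div_same, add_sub_add_right_eq_sub, abs_div,
        abs_of_pos hne, div_le_iff₀ hne, hP]
      rw [show ε * (2 * μ) = 2 * μ * ε from by ring]
    have hseteq : (Finset.univ.filter fun x : Fin n → Bool =>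
        |expectation (fun s => f (g x s)) - expectation f| ≤ ε) =
        Finset.univ.filter (P i j) := by
      ext x
      simp only [Finset.mem_filter, Finset.mem_univ, true_and]
      exact heq x
    rw [hseteq] at h
    exact h
  -- union bound
  set good : Finset (Fin n → Bool) := Finset.univ.filter (fun x => ∀ i j, P i j x) with hgood
  have hbadle : ∀ i j, ((Finset.univ.filter (fun x => ¬ P i j x)).card : ℝ) ≤
      δ * (Fintype.card (Fin n → Bool) : ℝ) := by
    intro i j
    have h1 := claimA i j
    have h2 : (Finset.univ.filter (fun x => ¬ P i j x)).card +
        (Finset.univ.filter (P i j)).card = Fintype.card (Fin n → Bool) := by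
      rw [add_comm, Finset.card_filter_add_card_filter_not]
      exact Finset.card_univ
    have h2' : ((Finset.univ.filter (fun x => ¬ P i j x)).card : ℝ) +
        ((Finset.univ.filter (P i j)).card : ℝ)
        = (Fintype.card (Fin n → Bool) : ℝ) := by exact_mod_cast h2
    nlinarith
  have hsubset : Finset.univ.filter (fun x => ¬ ∀ i j, P i j x) ⊆
      Finset.univ.biUnion (fun p : Fin w × Fin w =>
        Finset.univ.filter (fun x => ¬ P p.1 p.2 x)) := by
    intro x hx
    rw [Finset.mem_filter] at hx
    push_neg at hx
    obtain ⟨-, i, j, hij⟩ := hx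
    apply Finset.mem_biUnion.mpr
    exact ⟨(i, j), Finset.mem_univ _, Finset.mem_filter.mpr ⟨Finset.mem_univ _, hij⟩⟩
  have hbadcard : ((Finset.univ.filter (fun x => ¬ ∀ i j, P i j x)).card : ℝ) ≤
      (w:ℝ)^2 * δ * (Fintype.card (Fin n → Bool) : ℝ) := by
    have s1 : (Finset.univ.filter (fun x => ¬ ∀ i j, P i j x)).card ≤
        (Finset.univ.biUnion (fun p : Fin w × Fin w =>
          Finset.univ.filter (fun x => ¬ P p.1 p.2 x))).card :=
      Finset.card_le_card hsubset
    have s2 : (Finset.univ.biUnion (fun p : Fin w × Fin w =>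
          Finset.univ.filter (fun x => ¬ P p.1 p.2 x))).card ≤
        ∑ p : Fin w × Fin w, (Finset.univ.filter (fun x => ¬ P p.1 p.2 x)).card :=
      Finset.card_biUnion_le
    have s12 : ((Finset.univ.filter (fun x => ¬ ∀ i j, P i j x)).card : ℝ) ≤
        ∑ p : Fin w × Fin w,
          ((Finset.univ.filter (fun x => ¬ P p.1 p.2 x)).card : ℝ) := by
      exact_mod_cast le_trans s1 s2
    have s3 : ∑ p : Fin w × Fin w,
          ((Finset.univ.filter (fun x => ¬ P p.1 p.2 x)).card : ℝ) ≤
        ∑ _p : Fin w × Fin w, δ * (Fintype.card (Fin n → Bool) : ℝ) :=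
      Finset.sum_le_sum (fun p _ => hbadle p.1 p.2)
    have s4 : ∑ _p : Fin w × Fin w, δ * (Fintype.card (Fin n → Bool) : ℝ) =
        (w:ℝ)^2 * δ * (Fintype.card (Fin n → Bool) : ℝ) := by
      rw [Finset.sum_const, Finset.card_univ, nsmul_eq_mul]
      simp [Fintype.card_prod]
      ring
    linarith
  have hgoodcard : (1 - (w:ℝ)^2 * δ) * (Fintype.card (Fin n → Bool) : ℝ) ≤
      (good.card : ℝ) := by
    have h2 : good.card + (Finset.univ.filter (fun x => ¬ ∀ i j, P i j x)).card
        = Fintype.card (Fin n → Bool) := by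
      rw [hgood, Finset.card_filter_add_card_filter_not]
      exact Finset.card_univ
    have h2' : (good.card : ℝ) +
        ((Finset.univ.filter (fun x => ¬ ∀ i j, P i j x)).card : ℝ)
        = (Fintype.card (Fin n → Bool) : ℝ) := by exact_mod_cast h2
    nlinarith
  -- good ⊆ target
  have hfinal : good ⊆ Finset.univ.filter (fun x : Fin n → Bool =>
      ‖mexpect (fun s => 𝒜 (g x s)) - mexpect 𝒜‖ ≤ 2 * w * μ * ε) := by
    intro x hx
    rw [hgood, Finset.mem_filter] at hx
    obtain ⟨-, hx⟩ := hx
    rw [Finset.mem_filter]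
    refine ⟨Finset.mem_univ _, ?_⟩
    have hb : ‖mexpect (fun s => 𝒜 (g x s)) - mexpect 𝒜‖ ≤ w * (2 * μ * ε) := by
      apply norm_le_of_entries _ _ (by positivity)
      intro i j
      have hx' := hx i j
      rw [hP] at hx'
      rw [Matrix.sub_apply, mexpect_apply, mexpect_apply]
      exact hx'
    calc ‖mexpect (fun s => 𝒜 (g x s)) - mexpect 𝒜‖ ≤ w * (2 * μ * ε) := hb
      _ = 2 * w * μ * ε := by ring
  exact le_trans hgoodcard (by exact_mod_cast Finset.card_le_card hfinal)
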